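/- Let G be a bipartite graph on classes of sizes v and w with no cycle of length 4 or 6 and minimum degree at least 2. Then its number of edges satisfies e ≤ 2^{1/3}(vw)^{2/3}. -/

import Mathlib

open SimpleGraph Finset

abbrev VV (v w : ℕ) := (Fin v ⊕ Fin w)

variable {v w : ℕ} (G : SimpleGraph (VV v w)) [DecidableRel G.Adj]

def Spairs : Finset (VV v w × VV v w) :=
  univ.filter (fun p => G.Adj p.1 p.2 ∧ p.1.isLeft)

lemma mem_Spairs {p : VV v w × VV v w} :
    p ∈ Spairs G ↔ G.Adj p.1 p.2 ∧ p.1.isLeft := by simp [Spairs]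

lemma no_c4 {V : Type*} (G : SimpleGraph V)
    (h4 : ∀ (x) (c : G.Walk x x), c.IsCycle → c.length ≠ 4)
    {a b c d : V} (hab : G.Adj a b) (hbc : G.Adj b c) (hcd : G.Adj c d)
    (hda : G.Adj d a) (hac : a ≠ c) (hbd : b ≠ d) : False := by
  refine h4 a (.cons hab (.cons hbc (.cons hcd (.cons hda .nil)))) ?_ rfl
  have := hab.ne; have := hbc.ne; have := hcd.ne; have := hda.ne
  simp [Walk.isCycle_def, Walk.isTrail_def, Sym2.eq_iff]
  aesop

lemma no_c6 {V : Type*} (G : SimpleGraph V)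
    (h6 : ∀ (x) (c : G.Walk x x), c.IsCycle → c.length ≠ 6)
    {a b c d e f : V} (hab : G.Adj a b) (hbc : G.Adj b c) (hcd : G.Adj c d)
    (hde : G.Adj d e) (hef : G.Adj e f) (hfa : G.Adj f a)
    (hac : a ≠ c) (had : a ≠ d) (hae : a ≠ e)
    (hbd : b ≠ d) (hbe : b ≠ e) (hbf : b ≠ f)
    (hce : c ≠ e) (hcf : c ≠ f) (hdf : d ≠ f) : False := by
  refine h6 a (.cons hab (.cons hbc (.cons hcd (.cons hde (.cons hef (.cons hfa .nil)))))) ?_ rfl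
  have := hab.ne; have := hbc.ne; have := hcd.ne; have := hde.ne; have := hef.ne; have := hfa.ne
  simp [Walk.isCycle_def, Walk.isTrail_def, Sym2.eq_iff]
  aesop

lemma card_PT (v w : ℕ) :
    ((univ : Finset (VV v w × VV v w)).filter
      (fun p => p.1.isLeft ∧ ¬ p.2.isLeft)).card = v * w := by
  have : v * w = (univ : Finset (Fin v × Fin w)).card := by simp
  rw [this]
  refine (Finset.card_bij (fun p (_ : p ∈ (univ : Finset (Fin v × Fin w))) =>
      ((Sum.inl p.1, Sum.inr p.2) : VV v w × VV v w)) ?_ ?_ ?_).symm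
  · intro a _; simp
  · intro a _ b _ h; simpa [Prod.ext_iff] using h
  · intro b hb
    simp only [mem_filter] at hb
    obtain ⟨-, h1, h2⟩ := hb
    rcases b with ⟨x | x, y | y⟩ <;> simp_all

theorem key_count (hbip : ∀ x y, G.Adj x y → x.isLeft ≠ y.isLeft)
    (h4 : ∀ (x) (c : G.Walk x x), c.IsCycle → c.length ≠ 4)
    (h6 : ∀ (x) (c : G.Walk x x), c.IsCycle → c.length ≠ 6) :
    ∑ p ∈ Spairs G, ((G.degree p.1 - 1) * (G.degree p.2 - 1) + 1) ≤ v * w := by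
  classical
  have hr : ∀ {s t : VV v w}, G.Adj s t → s.isLeft = true → t.isLeft = false := by
    intro s t h hs
    have := hbip _ _ h
    cases ht : t.isLeft <;> simp_all
  have hl : ∀ {s t : VV v w}, G.Adj s t → s.isLeft = false → t.isLeft = true := by
    intro s t h hs
    have := hbip _ _ h
    cases ht : t.isLeft <;> simp_all
  set F : VV v w × VV v w → Finset (VV v w × VV v w) :=
    fun p => (G.neighborFinset p.1 \ {p.2}) ×ˢ (G.neighborFinset p.2 \ {p.1}) with hF
  have hcard : ∀ p ∈ Spairs G, (F p).card = (G.degree p.1 - 1) * (G.degree p.2 - 1) := by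
    intro p hp
    rw [mem_Spairs] at hp
    rw [hF]
    simp only [Finset.card_product]
    rw [Finset.card_sdiff_of_subset (by simpa using hp.1), Finset.card_sdiff_of_subset (by simpa using hp.1.symm)]
    simp only [SimpleGraph.degree, Finset.card_singleton]
  -- rewrite the sum as a card of a disjoint sum
  have hsum : ∑ p ∈ Spairs G, ((G.degree p.1 - 1) * (G.degree p.2 - 1) + 1) =
      (((Spairs G).sigma F).disjSum (Spairs G)).card := by
    rw [Finset.card_disjSum, Finset.card_sigma, Finset.sum_add_distrib, Finset.sum_const,
      smul_eq_mul, mul_one]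
    congr 1
    exact (Finset.sum_congr rfl hcard).symm
  rw [hsum, ← card_PT v w]
  set Φ : ((_ : VV v w × VV v w) × (VV v w × VV v w)) ⊕ (VV v w × VV v w) → VV v w × VV v w :=
    Sum.elim (fun q => (q.2.2, q.2.1)) id with hΦ
  apply Finset.card_le_card_of_injOn Φ
  · rintro (q | p) hu
    · rw [Finset.mem_coe, Finset.inl_mem_disjSum, Finset.mem_sigma] at hu
      obtain ⟨h1, h2⟩ := hu
      rw [mem_Spairs] at h1
      rw [hF] at h2
      simp only [Finset.mem_product, Finset.mem_sdiff, mem_neighborFinset,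
        Finset.mem_singleton] at h2
      obtain ⟨⟨hax, hxb⟩, ⟨hby, hya⟩⟩ := h2
      have hbr : (q.1.2).isLeft = false := hr h1.1 h1.2
      simp only [hΦ, Sum.elim_inl, Finset.mem_coe, mem_filter, mem_univ, true_and]
      exact ⟨hl hby hbr, by simp [hr hax h1.2]⟩
    · rw [Finset.mem_coe, Finset.inr_mem_disjSum, mem_Spairs] at hu
      simp only [hΦ, Sum.elim_inr, id_eq, Finset.mem_coe, mem_filter, mem_univ, true_and]
      exact ⟨hu.2, by simp [hr hu.1 hu.2]⟩
  · rintro (q | p) hu (q' | p') hu' heq <;>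
      simp only [Finset.mem_coe, Finset.inl_mem_disjSum, Finset.inr_mem_disjSum] at hu hu' <;>
      simp only [hΦ, Sum.elim_inl, Sum.elim_inr, id_eq] at heq
    · -- both paths
      obtain ⟨⟨a, b⟩, x, y⟩ := q
      obtain ⟨⟨a', b'⟩, x', y'⟩ := q'
      rw [Finset.mem_sigma, mem_Spairs] at hu hu'
      simp only [hF, Finset.mem_product, Finset.mem_sdiff, mem_neighborFinset,
        Finset.mem_singleton] at hu hu'
      obtain ⟨⟨hab, haL⟩, ⟨hax, hxb⟩, hby, hya⟩ := hu
      obtain ⟨⟨hab', haL'⟩, ⟨hax', hxb'⟩, hby', hya'⟩ := hu'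
      simp only [Prod.mk.injEq] at heq
      obtain ⟨h1, h2⟩ := heq
      subst h1; subst h2
      by_cases haa : a = a' <;> by_cases hbb : b = b'
      · subst haa; subst hbb; rfl
      · subst haa
        exact (no_c4 G h4 hab hby hby'.symm hab'.symm (Ne.symm hya) hbb).elim
      · subst hbb
        exact (no_c4 G h4 hab.symm hax hax'.symm hab' (Ne.symm hxb) haa).elim
      · have hbR : b.isLeft = false := hr hab haL
        have hxR : x.isLeft = false := hr hax haL
        have hyL : y.isLeft = true := hl hby hbR
        have hbR' : b'.isLeft = false := hr hab' haL'
        exact (no_c6 G h6 hax.symm hab hby hby'.symm hab'.symm hax'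
          hxb (fun h => absurd hyL (by rw [← h, hxR]; simp)) hxb' (Ne.symm hya)
          (fun h => absurd hbR' (by rw [← h, haL]; simp)) haa hbb
          (fun h => absurd haL' (by rw [← h, hbR]; simp)) hya').elim
    · -- path vs edge
      obtain ⟨⟨a, b⟩, x, y⟩ := q
      rw [Finset.mem_sigma, mem_Spairs] at hu
      simp only [hF, Finset.mem_product, Finset.mem_sdiff, mem_neighborFinset,
        Finset.mem_singleton] at hu
      obtain ⟨⟨hab, haL⟩, ⟨hax, hxb⟩, hby, hya⟩ := hu
      rw [mem_Spairs, ← heq] at hu'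
      exact (no_c4 G h4 hax.symm hab hby hu'.1 hxb (Ne.symm hya)).elim
    · -- edge vs path
      obtain ⟨⟨a, b⟩, x, y⟩ := q'
      rw [Finset.mem_sigma, mem_Spairs] at hu'
      simp only [hF, Finset.mem_product, Finset.mem_sdiff, mem_neighborFinset,
        Finset.mem_singleton] at hu'
      obtain ⟨⟨hab, haL⟩, ⟨hax, hxb⟩, hby, hya⟩ := hu'
      rw [mem_Spairs, heq] at hu
      exact (no_c4 G h4 hax.symm hab hby hu.1 hxb (Ne.symm hya)).elim
    · exact congrArg Sum.inr heq

lemma sum_Spairs_left {M : Type*} [AddCommMonoid M] (F : VV v w × VV v w → M) :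
    ∑ p ∈ Spairs G, F p =
      ∑ a ∈ univ.filter (fun a : VV v w => a.isLeft), ∑ b ∈ G.neighborFinset a, F (a, b) := by
  rw [Spairs, Finset.sum_filter, Finset.sum_filter, Fintype.sum_prod_type]
  refine Finset.sum_congr rfl fun a _ => ?_
  by_cases ha : a.isLeft = true
  · rw [if_pos ha, neighborFinset_eq_filter, Finset.sum_filter]
    simp [ha]
  · simp [ha]

lemma sum_Spairs_right {M : Type*} [AddCommMonoid M]
    (hbip : ∀ x y, G.Adj x y → x.isLeft ≠ y.isLeft) (F : VV v w × VV v w → M) :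
    ∑ p ∈ Spairs G, F p =
      ∑ b ∈ univ.filter (fun b : VV v w => ¬ b.isLeft), ∑ a ∈ G.neighborFinset b, F (a, b) := by
  have : Spairs G = univ.filter (fun p : VV v w × VV v w => G.Adj p.2 p.1 ∧ ¬ p.2.isLeft) := by
    apply Finset.filter_congr
    intro p _
    constructor
    · rintro ⟨h1, h2⟩
      refine ⟨h1.symm, fun hc => ?_⟩
      exact hbip _ _ h1 (h2.trans hc.symm)
    · rintro ⟨h1, h2⟩
      refine ⟨h1.symm, ?_⟩
      have := hbip _ _ h1
      cases hL : (p.1).isLeft <;> cases hR : (p.2).isLeft <;> simp_all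
  rw [this, Finset.sum_filter, Finset.sum_filter, Fintype.sum_prod_type_right]
  refine Finset.sum_congr rfl fun b _ => ?_
  by_cases hb : b.isLeft = true
  · simp [hb]
  · rw [if_pos (by simp [hb]), neighborFinset_eq_filter, Finset.sum_filter]
    simp [hb]

lemma card_left (v w : ℕ) : ((univ : Finset (VV v w)).filter (fun a => a.isLeft)).card = v := by
  have h : ((univ : Finset (Fin v)).card) = ((univ : Finset (VV v w)).filter (fun a => a.isLeft)).card := by
    refine Finset.card_bij (fun i (_ : i ∈ (univ : Finset (Fin v))) => (Sum.inl i : VV v w))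
      ?_ ?_ ?_
    · intro a _; simp
    · intro a _ b _ h; simpa using h
    · rintro (x | x) hb
      · exact ⟨x, mem_univ x, rfl⟩
      · simp at hb
  simpa using h.symm
lemma card_right (v w : ℕ) : ((univ : Finset (VV v w)).filter (fun a => ¬ a.isLeft)).card = w := by
  have h : ((univ : Finset (Fin w)).card) = ((univ : Finset (VV v w)).filter (fun a => ¬ a.isLeft)).card := by
    refine Finset.card_bij (fun i (_ : i ∈ (univ : Finset (Fin w))) => (Sum.inr i : VV v w))
      ?_ ?_ ?_
    · intro a _; simp
    · intro a _ b _ h; simpa using h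
    · rintro (x | x) hb
      · simp at hb
      · exact ⟨x, mem_univ x, rfl⟩
  simpa using h.symm

lemma card_Spairs (hbip : ∀ x y, G.Adj x y → x.isLeft ≠ y.isLeft) :
    (Spairs G).card = G.edgeFinset.card := by
  refine Finset.card_bij (fun p (_ : p ∈ Spairs G) => s(p.1, p.2)) ?_ ?_ ?_
  · intro a ha
    rw [mem_Spairs] at ha
    simpa [mem_edgeFinset] using ha.1
  · intro a ha b hb h
    rw [mem_Spairs] at ha hb
    rw [Sym2.mk_eq_mk_iff] at h
    rcases h with h | h
    · exact h
    · exfalso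
      have h2 : b.2.isLeft = true := by rw [show b.2 = a.1 from congrArg Prod.fst h.symm]; exact ha.2
      have h1 := hbip _ _ hb.1
      rw [hb.2, h2] at h1
      exact h1 rfl
  · intro q hq
    rw [mem_edgeFinset] at hq
    induction q with
    | _ x y =>
      rcases Bool.eq_false_or_eq_true x.isLeft with hx | hx
      · exact ⟨(x, y), by rw [mem_Spairs]; exact ⟨hq, hx⟩, rfl⟩
      · have h1 := hbip _ _ hq
        have hy : y.isLeft = true := by cases hy : y.isLeft <;> simp_all
        exact ⟨(y, x), by rw [mem_Spairs]; exact ⟨hq.symm, hy⟩, Sym2.eq_swap⟩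


lemma dcs_analytic {α : Type*} [DecidableEq α] (S : Finset α) (d1 d2 W : α → ℝ)
    (hd1 : ∀ p, 2 ≤ d1 p) (hd2 : ∀ p, 2 ≤ d2 p)
    (hW : ∀ p, W p = (d1 p - 1) * (d2 p - 1) + 1)
    (v w : ℝ) (hv0 : 0 ≤ v) (hw0 : 0 ≤ w)
    (hA : ∑ p ∈ S, W p ≤ v * w)
    (hv : ∑ p ∈ S, 1 / d1 p = v) (hw : ∑ p ∈ S, 1 / d2 p = w) :
    (S.card : ℝ) ≤ 2 ^ ((1 : ℝ) / 3) * (v * w) ^ ((2 : ℝ) / 3) := by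
  have hWpos : ∀ p, 0 < W p := by
    intro p; have := hd1 p; have := hd2 p; rw [hW p]; nlinarith
  have hWd : ∀ p, d1 p * d2 p ≤ 2 * W p := by
    intro p; have h1 := hd1 p; have h2 := hd2 p; rw [hW p]
    nlinarith [mul_nonneg (by linarith : (0:ℝ) ≤ d1 p - 2) (by linarith : (0:ℝ) ≤ d2 p - 2)]
  set A := ∑ p ∈ S, W p with hAdef
  set B := ∑ p ∈ S, 1 / Real.sqrt (W p) with hBdef
  set C := ∑ p ∈ S, Real.sqrt (W p) with hCdef
  have hBnn : 0 ≤ B := Finset.sum_nonneg fun p _ => by have := hWpos p; positivity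
  have hCnn : 0 ≤ C := Finset.sum_nonneg fun p _ => Real.sqrt_nonneg _
  have hAnn : 0 ≤ A := Finset.sum_nonneg fun p _ => (hWpos p).le
  have cs1 : (S.card:ℝ)^2 ≤ C * B := by
    have h1 := Real.sum_sqrt_mul_sqrt_le S (f := fun p => Real.sqrt (W p))
      (g := fun p => 1 / Real.sqrt (W p)) (fun p => Real.sqrt_nonneg _)
      (fun p => by have := hWpos p; positivity)
    have h0 : ∑ p ∈ S, Real.sqrt (Real.sqrt (W p)) * Real.sqrt (1 / Real.sqrt (W p))
        = (S.card:ℝ) := by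
      rw [Finset.card_eq_sum_ones, Nat.cast_sum]
      refine Finset.sum_congr rfl fun p _ => ?_
      have hs : Real.sqrt (W p) ≠ 0 := by have := hWpos p; positivity
      rw [← Real.sqrt_mul (Real.sqrt_nonneg _), mul_one_div, div_self hs, Real.sqrt_one]
      norm_num
    rw [h0] at h1
    calc (S.card:ℝ)^2 ≤ (Real.sqrt C * Real.sqrt B)^2 := by
          apply pow_le_pow_left₀ (by positivity) h1
      _ = C * B := by rw [mul_pow, Real.sq_sqrt hCnn, Real.sq_sqrt hBnn]
  have cs2 : C^2 ≤ A * S.card := by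
    have h1 := Real.sum_sqrt_mul_sqrt_le S (f := fun p => W p)
      (g := fun _ => (1:ℝ)) (fun p => (hWpos p).le) (fun _ => zero_le_one)
    have h1' : C ≤ Real.sqrt A * Real.sqrt (S.card:ℝ) := by
      calc C = ∑ p ∈ S, Real.sqrt (W p) * Real.sqrt 1 := by simp [hCdef]
        _ ≤ Real.sqrt (∑ p ∈ S, W p) * Real.sqrt (∑ _p ∈ S, (1:ℝ)) := h1
        _ = Real.sqrt A * Real.sqrt (S.card:ℝ) := by
            rw [hAdef, Finset.sum_const, nsmul_eq_mul, mul_one]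
    calc C^2 ≤ (Real.sqrt A * Real.sqrt (S.card:ℝ))^2 := pow_le_pow_left₀ hCnn h1' 2
      _ = A * S.card := by rw [mul_pow, Real.sq_sqrt hAnn, Real.sq_sqrt (Nat.cast_nonneg _)]
  have cs3 : B^2 ≤ 2 * (v * w) := by
    have step1 : B ≤ ∑ p ∈ S, Real.sqrt 2 * (Real.sqrt (1 / d1 p) * Real.sqrt (1 / d2 p)) := by
      refine Finset.sum_le_sum fun p _ => ?_
      have hdp1 : (0:ℝ) < d1 p := lt_of_lt_of_le (by norm_num) (hd1 p)
      have hdp2 : (0:ℝ) < d2 p := lt_of_lt_of_le (by norm_num) (hd2 p)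
      have hWp := hWpos p
      have key : Real.sqrt (d1 p * d2 p) ≤ Real.sqrt 2 * Real.sqrt (W p) := by
        rw [← Real.sqrt_mul (by norm_num : (0:ℝ) ≤ 2)]
        exact Real.sqrt_le_sqrt (hWd p)
      have hrhs : Real.sqrt 2 * (Real.sqrt (1 / d1 p) * Real.sqrt (1 / d2 p))
          = Real.sqrt 2 / Real.sqrt (d1 p * d2 p) := by
        rw [← Real.sqrt_mul (le_of_lt (one_div_pos.mpr hdp1)), one_div_mul_one_div, one_div,
          Real.sqrt_inv, ← one_div, mul_one_div]
      rw [hrhs, div_le_div_iff₀ (Real.sqrt_pos.mpr hWp) (Real.sqrt_pos.mpr (mul_pos hdp1 hdp2)),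
        one_mul]
      exact key
    have step2 : ∑ p ∈ S, Real.sqrt 2 * (Real.sqrt (1 / d1 p) * Real.sqrt (1 / d2 p))
        ≤ Real.sqrt 2 * (Real.sqrt v * Real.sqrt w) := by
      rw [← Finset.mul_sum]
      apply mul_le_mul_of_nonneg_left _ (Real.sqrt_nonneg 2)
      have h1 := Real.sum_sqrt_mul_sqrt_le S (f := fun p => 1 / d1 p) (g := fun p => 1 / d2 p)
        (fun p => le_of_lt (one_div_pos.mpr (lt_of_lt_of_le two_pos (hd1 p))))
        (fun p => le_of_lt (one_div_pos.mpr (lt_of_lt_of_le two_pos (hd2 p))))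
      rw [hv, hw] at h1
      exact h1
    have hB : B ≤ Real.sqrt 2 * (Real.sqrt v * Real.sqrt w) := le_trans step1 step2
    calc B^2 ≤ (Real.sqrt 2 * (Real.sqrt v * Real.sqrt w))^2 := pow_le_pow_left₀ hBnn hB 2
      _ = 2 * (v * w) := by
          rw [mul_pow, mul_pow, Real.sq_sqrt (by norm_num : (0:ℝ) ≤ 2),
            Real.sq_sqrt hv0, Real.sq_sqrt hw0]
  have hvw : (0:ℝ) ≤ v * w := mul_nonneg hv0 hw0
  have hfinal : (S.card:ℝ)^4 ≤ 2 * S.card * (v * w)^2 := by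
    have h1 : (S.card:ℝ)^4 ≤ (C*B)^2 := by
      calc (S.card:ℝ)^4 = ((S.card:ℝ)^2)^2 := by ring
        _ ≤ (C*B)^2 := pow_le_pow_left₀ (sq_nonneg _) cs1 2
    have h3 : C^2 * B^2 ≤ (A * S.card) * (2 * (v*w)) :=
      mul_le_mul cs2 cs3 (sq_nonneg B) (by positivity)
    have h4' : (A * S.card) * (2 * (v*w)) ≤ ((v*w) * S.card) * (2 * (v*w)) := by
      apply mul_le_mul_of_nonneg_right _ (by positivity)
      exact mul_le_mul_of_nonneg_right hA (Nat.cast_nonneg _)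
    calc (S.card:ℝ)^4 ≤ C^2*B^2 := by rw [show C^2*B^2 = (C*B)^2 by ring]; exact h1
      _ ≤ (A * S.card) * (2 * (v*w)) := h3
      _ ≤ ((v*w) * S.card) * (2 * (v*w)) := h4'
      _ = 2 * S.card * (v*w)^2 := by ring
  have hcube : (S.card:ℝ)^3 ≤ 2 * (v * w)^2 := by
    rcases Nat.eq_zero_or_pos S.card with he0 | hepos
    · rw [he0]; norm_num; positivity
    · have he' : (0:ℝ) < S.card := by exact_mod_cast hepos
      have : (S.card:ℝ) * (S.card:ℝ)^3 ≤ (S.card:ℝ) * (2 * (v*w)^2) := by nlinarith [hfinal]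
      exact le_of_mul_le_mul_left this he'
  have hrp : ((S.card:ℝ)^3)^((1:ℝ)/3) ≤ (2 * (v*w)^2)^((1:ℝ)/3) :=
    Real.rpow_le_rpow (by positivity) hcube (by norm_num)
  have hl : ((S.card:ℝ)^3)^((1:ℝ)/3) = (S.card:ℝ) := by
    rw [← Real.rpow_natCast (S.card:ℝ) 3, ← Real.rpow_mul (Nat.cast_nonneg _)]
    norm_num
  have hr : (2 * (v*w)^2)^((1:ℝ)/3) = 2 ^ ((1:ℝ)/3) * (v * w) ^ ((2:ℝ)/3) := by
    rw [Real.mul_rpow (by norm_num) (by positivity),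
      ← Real.rpow_natCast (v*w) 2, ← Real.rpow_mul hvw]
    norm_num
  rw [hl, hr] at hrp
  exact hrp


theorem stmt_18 (v w : ℕ) (G : SimpleGraph (Fin v ⊕ Fin w)) [DecidableRel G.Adj]
    (hbip : ∀ x y, G.Adj x y → x.isLeft ≠ y.isLeft)
    (h4 : ∀ (x) (c : G.Walk x x), c.IsCycle → c.length ≠ 4)
    (h6 : ∀ (x) (c : G.Walk x x), c.IsCycle → c.length ≠ 6)
    (hdeg : ∀ x, 2 ≤ G.degree x)
    (e : ℕ) (he : e = G.edgeFinset.card) :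
    (e : ℝ) ≤ 2 ^ ((1 : ℝ) / 3) * ((v : ℝ) * w) ^ ((2 : ℝ) / 3) := by
  classical
  have hcardS : e = (Spairs G).card := by rw [he, card_Spairs G hbip]
  rw [hcardS]
  have hd1 : ∀ p : VV v w × VV v w, (2:ℝ) ≤ (G.degree p.1 : ℝ) := fun p => by
    exact_mod_cast hdeg p.1
  have hd2 : ∀ p : VV v w × VV v w, (2:ℝ) ≤ (G.degree p.2 : ℝ) := fun p => by
    exact_mod_cast hdeg p.2
  have hA : ∑ p ∈ Spairs G, (((G.degree p.1 : ℝ) - 1) * ((G.degree p.2 : ℝ) - 1) + 1)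
      ≤ (v:ℝ) * w := by
    have h1 := key_count G hbip h4 h6
    have h2 : ∑ p ∈ Spairs G, (((G.degree p.1 : ℝ) - 1) * ((G.degree p.2 : ℝ) - 1) + 1) =
        ((∑ p ∈ Spairs G, ((G.degree p.1 - 1) * (G.degree p.2 - 1) + 1) : ℕ) : ℝ) := by
      rw [Nat.cast_sum]
      refine Finset.sum_congr rfl fun p hp => ?_
      have e1 : (1:ℕ) ≤ G.degree p.1 := le_trans (by norm_num) (hdeg p.1)
      have e2 : (1:ℕ) ≤ G.degree p.2 := le_trans (by norm_num) (hdeg p.2)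
      push_cast [Nat.cast_sub e1, Nat.cast_sub e2]
      ring
    rw [h2]
    exact_mod_cast h1
  have hv : ∑ p ∈ Spairs G, 1 / (G.degree p.1 : ℝ) = (v:ℝ) := by
    rw [sum_Spairs_left]
    have h : ∀ a ∈ univ.filter (fun a : VV v w => a.isLeft),
        ∑ _b ∈ G.neighborFinset a, 1 / (G.degree a : ℝ) = 1 := by
      intro a _
      rw [Finset.sum_const, card_neighborFinset_eq_degree, nsmul_eq_mul]
      have hne : (G.degree a : ℝ) ≠ 0 := by
        have := hdeg a; positivity
      field_simp
    rw [Finset.sum_congr rfl h, Finset.sum_const, card_left, nsmul_eq_mul, mul_one]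
  have hw : ∑ p ∈ Spairs G, 1 / (G.degree p.2 : ℝ) = (w:ℝ) := by
    rw [sum_Spairs_right G hbip]
    have h : ∀ b ∈ univ.filter (fun b : VV v w => ¬ b.isLeft),
        ∑ _a ∈ G.neighborFinset b, 1 / (G.degree b : ℝ) = 1 := by
      intro b _
      rw [Finset.sum_const, card_neighborFinset_eq_degree, nsmul_eq_mul]
      have hne : (G.degree b : ℝ) ≠ 0 := by
        have := hdeg b; positivity
      field_simp
    rw [Finset.sum_congr rfl h, Finset.sum_const, card_right, nsmul_eq_mul, mul_one]
  exact dcs_analytic (Spairs G) (fun p => (G.degree p.1 : ℝ)) (fun p => (G.degree p.2 : ℝ))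
    (fun p => ((G.degree p.1 : ℝ) - 1) * ((G.degree p.2 : ℝ) - 1) + 1)
    hd1 hd2 (fun p => rfl) (v:ℝ) (w:ℝ) (Nat.cast_nonneg v) (Nat.cast_nonneg w) hA hv hw
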